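/- If a realizable parity configuration P has a bad pair (x, y) with x ∈ Dir(v_i,v_j) and y ∈ Dir(v_j,v_k), then x + y + 1 (mod 2) ∈ Dir(v_i,v_k): the unique other parity must be achievable by a direct path from v_i to v_k. -/

import Mathlib

/-- `l` is a simple directed path along the edge relation `E` from `a` to `b`. -/
def IsDipathFrom {V : Type*} (E : V → V → Prop) (l : List V) (a b : V) : Prop :=
  l.Nodup ∧ l.Chain' E ∧ l.head? = some a ∧ l.getLast? = some b

/-- The length (number of edges) of a path given as its list of vertices. -/
def pathLen {V : Type*} (l : List V) : ℕ := l.length - 1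

/-- `p ∈ Dir(a, b)` (w.r.t. the third terminal `c`): there is a simple directed path of
parity `p` from `a` to `b` avoiding `c`. -/
def HasDir {V : Type*} (E : V → V → Prop) (a b c : V) (p : ℕ) : Prop :=
  ∃ l : List V, IsDipathFrom E l a b ∧ c ∉ l ∧ pathLen l % 2 = p

/-- `p ∈ Via(a, m, b)`: there is a simple path of parity `p` from `a` to `b` through `m`,
and no simple path of parity `p` from `a` to `b` avoids `m`. -/
def HasVia {V : Type*} (E : V → V → Prop) (a m b : V) (p : ℕ) : Prop :=
  (∃ l : List V, IsDipathFrom E l a b ∧ m ∈ l ∧ pathLen l % 2 = p) ∧ ¬ HasDir E a b m p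


open List in
lemma split_first_common {V : Type*} (Q : List V) :
    ∀ (P : List V), (∃ e, e ∈ P ∧ e ∈ Q) →
      ∃ P₁ u P₂, P = P₁ ++ u :: P₂ ∧ u ∈ Q ∧ ∀ a ∈ P₁, a ∉ Q := by
  intro P
  induction P with
  | nil => rintro ⟨e, he, -⟩; simp at he
  | cons h t ih =>
    classical
    rintro ⟨e, he, heQ⟩
    by_cases hh : h ∈ Q
    · exact ⟨[], h, t, rfl, hh, by simp⟩
    · have het : e ∈ t := by
        rcases List.mem_cons.mp he with rfl | het
        · exact absurd heQ hh
        · exact het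
      obtain ⟨P₁, u, P₂, hEq, huQ, hP₁⟩ := ih ⟨e, het, heQ⟩
      refine ⟨h :: P₁, u, P₂, by simp [hEq], huQ, ?_⟩
      rintro a ha
      rcases List.mem_cons.mp ha with rfl | ha
      · exact hh
      · exact hP₁ a ha

lemma concat_key {V : Type*} (E : V → V → Prop) (a b c : V) (P Q : List V)
    (hP : IsDipathFrom E P a b) (hQ : IsDipathFrom E Q b c) :
    ∃ R, IsDipathFrom E R a c ∧
      (b ∉ R ∨ (b ∈ R ∧ pathLen R = pathLen P + pathLen Q)) := by
  obtain ⟨hPnd, hPch, hPh, hPl⟩ := hP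
  obtain ⟨hQnd, hQch, hQh, hQl⟩ := hQ
  have hbP : b ∈ P := List.mem_of_getLast? hPl
  have hbQ : b ∈ Q := List.mem_of_mem_head? (by simp [hQh])
  obtain ⟨P₁, u, P₂, hPeq, huQ, hP₁⟩ := split_first_common Q P ⟨b, hbP, hbQ⟩
  -- split Q at u
  obtain ⟨Q₁, Q₂, hQeq⟩ : ∃ Q₁ Q₂, Q = Q₁ ++ u :: Q₂ := by
    obtain ⟨s, t, h⟩ := List.append_of_mem huQ
    exact ⟨s, t, h⟩
  refine ⟨P₁ ++ u :: Q₂, ⟨?_, ?_, ?_, ?_⟩, ?_⟩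
  · -- Nodup
    rw [List.nodup_append']
    refine ⟨(List.nodup_append'.mp (hPeq ▸ hPnd)).1,
      (List.nodup_append'.mp (hQeq ▸ hQnd)).2.1, ?_⟩
    intro z hz hz'
    exact hP₁ z hz (hQeq ▸ List.mem_append_right Q₁ hz')
  · -- Chain'
    rw [List.Chain', List.isChain_append]
    have hPc := List.isChain_append.mp (hPeq ▸ hPch)
    have hQc := List.isChain_append.mp (hQeq ▸ hQch)
    refine ⟨hPc.1, hQc.2.1, ?_⟩
    intro z hz w hw
    simp only [List.head?_cons, Option.mem_def, Option.some.injEq] at hw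
    exact hPc.2.2 z hz w (by simp [← hw])
  · -- head?
    rw [hPeq] at hPh
    cases P₁ with
    | nil => simpa using hPh
    | cons p pt => simpa using hPh
  · -- getLast?
    rw [List.getLast?_append_cons]
    rw [hQeq, List.getLast?_append_cons] at hQl
    exact hQl
  · -- dichotomy
    by_cases hub : u = b
    · subst hub
      -- Q₁ = [] since head of Q is u
      have hQ₁ : Q₁ = [] := by
        cases Q₁ with
        | nil => rfl
        | cons q qt =>
          exfalso
          rw [hQeq] at hQh hQnd
          simp only [List.cons_append, List.head?_cons, Option.some.injEq] at hQh
          subst hQh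
          exact (List.disjoint_of_nodup_append hQnd) (List.mem_cons_self (a := q) (l := qt))
            (List.mem_cons_self (a := q) (l := Q₂))
      -- P₂ = [] since last of P is u, which sits before P₂
      have hP₂ : P₂ = [] := by
        cases P₂ with
        | nil => rfl
        | cons p pt =>
          exfalso
          rw [hPeq, List.getLast?_append_cons] at hPl
          have : u ∈ p :: pt := by
            have hlm := List.mem_of_getLast? hPl
            rcases List.mem_cons.mp hlm with h | h
            ·
              -- getLast? (u :: p :: pt) = getLast? (p :: pt)
              rw [List.getLast?_cons_cons] at hPl
              exact List.mem_of_getLast? hPl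
            · exact h
          rw [hPeq] at hPnd
          have hnd := (List.nodup_append'.mp hPnd).2.1
          exact (List.nodup_cons.mp hnd).1 this
      subst hQ₁ hP₂
      refine Or.inr ⟨List.mem_append_right P₁ (List.mem_cons_self (a := u) (l := Q₂)), ?_⟩
      simp only [hPeq, hQeq, pathLen, List.length_append, List.length_cons,
        List.nil_append, List.length_nil]
      omega
    · -- u ≠ b : b avoided
      refine Or.inl ?_
      intro hbR
      rcases List.mem_append.mp hbR with h | h
      · exact hP₁ b h hbQ
      · rcases List.mem_cons.mp h with h | h
        · exact hub h.symm
        · -- b ∈ Q₂, but b is the head of Q; contradiction with nodup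
          cases Q₁ with
          | nil =>
            rw [hQeq] at hQh
            simp only [List.nil_append, List.head?_cons, Option.some.injEq] at hQh
            exact hub hQh
          | cons q qt =>
            rw [hQeq] at hQh hQnd
            simp only [List.cons_append, List.head?_cons, Option.some.injEq] at hQh
            subst hQh
            exact (List.disjoint_of_nodup_append hQnd) (List.mem_cons_self (a := q) (l := qt))
              (List.mem_cons_of_mem u h)

/-- `(x, y)` is a bad pair between `Dir(v i, v j)` and `Dir(v j, v k)`. -/
def BadPair {V : Type*} (E : V → V → Prop) (v : Fin 3 → V) (i j k : Fin 3) (x y : ℕ) : Prop :=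
  HasDir E (v i) (v j) (v k) x ∧ HasDir E (v j) (v k) (v i) y ∧
    ¬ (HasDir E (v i) (v k) (v j) ((x + y) % 2) ∨ HasVia E (v i) (v j) (v k) ((x + y) % 2))

/-- If a realizable parity configuration has a bad pair `(x, y)` with `x ∈ Dir(v i, v j)`
and `y ∈ Dir(v j, v k)`, then `x + y + 1 (mod 2) ∈ Dir(v i, v k)`: the unique other parity
must be achievable by a direct path from `v i` to `v k`. -/
theorem stmt_10 {V : Type*} (E : V → V → Prop) (v : Fin 3 → V) (hv : Function.Injective v)
    (i j k : Fin 3) (hij : i ≠ j) (hjk : j ≠ k) (hik : i ≠ k) (x y : ℕ) (hx : x < 2) (hy : y < 2)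
    (hxDir : HasDir E (v i) (v j) (v k) x) (hyDir : HasDir E (v j) (v k) (v i) y)
    (hbad : ¬ (HasDir E (v i) (v k) (v j) ((x + y) % 2) ∨
               HasVia E (v i) (v j) (v k) ((x + y) % 2))) :
    HasDir E (v i) (v k) (v j) ((x + y + 1) % 2) := by
  push_neg at hbad
  obtain ⟨hbad1, hbad2⟩ := hbad
  obtain ⟨P, hP, hPk, hPx⟩ := hxDir
  obtain ⟨Q, hQ, hQi, hQy⟩ := hyDir
  obtain ⟨R, hR, hdich⟩ := concat_key E (v i) (v j) (v k) P Q hP hQ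
  rcases hdich with hbR | ⟨hbR, hlen⟩
  · by_cases hp : pathLen R % 2 = (x + y) % 2
    · exact absurd ⟨R, hR, hbR, hp⟩ hbad1
    · exact ⟨R, hR, hbR, by omega⟩
  · exfalso
    apply hbad2
    refine ⟨⟨R, hR, hbR, ?_⟩, hbad1⟩
    rw [hlen]
    omega
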